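/- Let u : ℝ² → ℝ be a smooth function that is ℤ²-periodic, i.e. u(x+k) = u(x) for all x ∈ ℝ² and k ∈ ℤ². Then ∫_{[0,1]²} det D²u(x) / (1 + |∇u(x)|²)^{3/2} dx = 0; that is, the integral of the Gaussian curvature of the graph of u against the surface area element √(1+|∇u|²) over one periodicity cell vanishes (a Gauss–Bonnet type identity for periodic graphs). -/

import Mathlib

open MeasureTheory

noncomputable section

abbrev Euc (N : ℕ) := EuclideanSpace ℝ (Fin N)

/-- Hessian matrix `(D²u(x))_{ij} = ∂_i ∂_j u(x)`. -/
def hessian {N : ℕ} (u : Euc N → ℝ) (x : Euc N) : Matrix (Fin N) (Fin N) ℝ :=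
  Matrix.of fun i j =>
    fderiv ℝ (fun y => fderiv ℝ u y (EuclideanSpace.single j 1)) x (EuclideanSpace.single i 1)

/-- The integer translation vector associated to `k : Fin N → ℤ`. -/
def intVec {N : ℕ} (k : Fin N → ℤ) : Euc N :=
  (WithLp.equiv 2 (Fin N → ℝ)).symm fun i => (k i : ℝ)

/-- The unit cube `[0,1]^N`. -/
def unitCube (N : ℕ) : Set (Euc N) := {x | ∀ i, x i ∈ Set.Icc (0 : ℝ) 1}

namespace GBAux

abbrev P2 := Fin 2 → ℝ

/-- Partial derivative in the `i`-th coordinate direction. -/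
def D (i : Fin 2) (f : P2 → ℝ) (x : P2) : ℝ := fderiv ℝ f x (Pi.single i 1)

lemma contDiff_D {f : P2 → ℝ} (hf : ContDiff ℝ (⊤ : ℕ∞) f) (i : Fin 2) :
    ContDiff ℝ (⊤ : ℕ∞) (D i f) := by
  exact (hf.fderiv_right (by exact_mod_cast le_top)).clm_apply contDiff_const

lemma diff_D {f : P2 → ℝ} (hf : ContDiff ℝ (⊤ : ℕ∞) f) (i : Fin 2) :
    Differentiable ℝ (D i f) := (contDiff_D hf i).differentiable (by simp)

lemma D_symm {f : P2 → ℝ} (hf : ContDiff ℝ (⊤ : ℕ∞) f) (i j : Fin 2) (x : P2) :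
    D i (D j f) x = D j (D i f) x := by
  have hdf : DifferentiableAt ℝ (fderiv ℝ f) x :=
    ((hf.fderiv_right (m := (⊤:ℕ∞)) (by exact_mod_cast le_top)).differentiable
      (by simp)) x
  have hsymm : IsSymmSndFDerivAt ℝ f x := by
    apply hf.contDiffAt.isSymmSndFDerivAt
    rw [show ((2:WithTop ℕ∞)) = ((2:ℕ∞):WithTop ℕ∞) by rfl]
    rw [minSmoothness_of_isRCLikeNormedField]
    exact_mod_cast (le_top : (2:ℕ∞) ≤ ⊤)
  have key : ∀ w v : P2, fderiv ℝ (fun y => fderiv ℝ f y w) x v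
      = fderiv ℝ (fderiv ℝ f) x v w := by
    intro w v
    rw [fderiv_clm_apply hdf (differentiableAt_const w)]
    simp
  show fderiv ℝ (fun y => fderiv ℝ f y (Pi.single j 1)) x (Pi.single i 1)
      = fderiv ℝ (fun y => fderiv ℝ f y (Pi.single i 1)) x (Pi.single j 1)
  rw [key, key]
  exact hsymm _ _

lemma per_D {f : P2 → ℝ} (hf : Differentiable ℝ f) {c : P2} (hp : ∀ x, f (x + c) = f x)
    (i : Fin 2) (x : P2) : D i f (x + c) = D i f x := by
  have h1 : HasFDerivAt (fun y => f (y + c)) (fderiv ℝ f (x + c)) x := by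
    have := (hf (x + c)).hasFDerivAt.comp x ((hasFDerivAt_id x).add_const c)
    exact this
  rw [funext hp] at h1
  rw [D, D, h1.fderiv]

/-- The auxiliary function `α = p / ((1+q²)·√(1+p²+q²))`. -/
def alp (g : P2 → ℝ) (x : P2) : ℝ :=
  D 0 g x * ((1 + D 1 g x * D 1 g x) *
    Real.sqrt (1 + (D 0 g x * D 0 g x + D 1 g x * D 1 g x)))⁻¹

set_option maxHeartbeats 1000000 in
/-- The key pointwise identity: the Gauss curvature integrand is a divergence. -/
lemma div_identity (g : P2 → ℝ) (hg : ContDiff ℝ (⊤ : ℕ∞) g) (x : P2) :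
    D 0 (fun y => alp g y * D 1 (D 1 g) y) x
      + D 1 (fun y => -(alp g y * D 0 (D 1 g) y)) x
    = (D 0 (D 0 g) x * D 1 (D 1 g) x - D 0 (D 1 g) x * D 1 (D 0 g) x)
        / (1 + (D 0 g x * D 0 g x + D 1 g x * D 1 g x)) ^ ((3 : ℝ) / 2) := by
  have htop : ((⊤:ℕ∞) : WithTop ℕ∞) + 1 ≤ ((⊤:ℕ∞) : WithTop ℕ∞) := by exact_mod_cast le_top
  have h1top : (1 : WithTop ℕ∞) ≤ ((⊤:ℕ∞) : WithTop ℕ∞) := by exact_mod_cast le_top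
  set p : P2 → ℝ := D 0 g with hp_def
  set q : P2 → ℝ := D 1 g with hq_def
  have hp : ContDiff ℝ (⊤:ℕ∞) p := contDiff_D hg 0
  have hq : ContDiff ℝ (⊤:ℕ∞) q := contDiff_D hg 1
  set P := fderiv ℝ p x with hP_def
  set Q := fderiv ℝ q x with hQ_def
  have hPp : HasFDerivAt p P x := ((hp.differentiable (by simp)) x).hasFDerivAt
  have hQq : HasFDerivAt q Q x := ((hq.differentiable (by simp)) x).hasFDerivAt
  have hSpos : 0 < 1 + (p x * p x + q x * q x) := by
    nlinarith [mul_self_nonneg (p x), mul_self_nonneg (q x)]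
  set w := Real.sqrt (1 + (p x * p x + q x * q x)) with hw_def
  have hwpos : 0 < w := Real.sqrt_pos.2 hSpos
  have hw2 : w * w = 1 + (p x * p x + q x * q x) := Real.mul_self_sqrt hSpos.le
  have hS : HasFDerivAt (fun y => 1 + (p y * p y + q y * q y))
      ((p x • P + p x • P) + (q x • Q + q x • Q)) x :=
    ((hPp.mul hPp).add (hQq.mul hQq)).const_add 1
  have hW : HasFDerivAt (fun y => Real.sqrt (1 + (p y * p y + q y * q y)))
      ((1 / (2 * w)) • ((p x • P + p x • P) + (q x • Q + q x • Q))) x :=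
    (Real.hasDerivAt_sqrt hSpos.ne').comp_hasFDerivAt x hS
  set LW := ((1 / (2 * w)) • ((p x • P + p x • P) + (q x • Q + q x • Q))) with hLW_def
  set Lden := ((1 + q x * q x) • LW + w • ((q x • Q + q x • Q))) with hLden_def
  have hden : HasFDerivAt
      (fun y => (1 + q y * q y) * Real.sqrt (1 + (p y * p y + q y * q y))) Lden x :=
    ((hQq.mul hQq).const_add 1).mul hW
  have hqq : 0 < 1 + q x * q x := by nlinarith [mul_self_nonneg (q x)]
  have hdnz : (1 + q x * q x) * w ≠ 0 := (mul_pos hqq hwpos).ne'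
  have hinv : HasFDerivAt
      (fun y => ((1 + q y * q y) * Real.sqrt (1 + (p y * p y + q y * q y)))⁻¹)
      ((-(((1 + q x * q x) * w) ^ 2)⁻¹) • Lden) x :=
    (hasDerivAt_inv hdnz).comp_hasFDerivAt x hden
  set Lα := (p x • ((-(((1 + q x * q x) * w) ^ 2)⁻¹) • Lden)
      + ((1 + q x * q x) * w)⁻¹ • P) with hLα_def
  have hα : HasFDerivAt (alp g) Lα x := hPp.mul hinv
  have hB : HasFDerivAt (D 1 q) (fderiv ℝ (D 1 q) x) x := ((diff_D hq 1) x).hasFDerivAt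
  have hA : HasFDerivAt (D 0 q) (fderiv ℝ (D 0 q) x) x := ((diff_D hq 0) x).hasFDerivAt
  have hV0 : HasFDerivAt (fun y => alp g y * D 1 q y)
      (alp g x • fderiv ℝ (D 1 q) x + D 1 q x • Lα) x := hα.mul hB
  have hV1 : HasFDerivAt (fun y => -(alp g y * D 0 q y))
      (-(alp g x • fderiv ℝ (D 0 q) x + D 0 q x • Lα)) x := (hα.mul hA).neg
  have e0 : D 0 (fun y => alp g y * D 1 q y) x
      = alp g x * D 0 (D 1 q) x + D 1 q x * (Lα (Pi.single 0 1)) := by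
    rw [D, hV0.fderiv]; simp [D]
  have e1 : D 1 (fun y => -(alp g y * D 0 q y)) x
      = -(alp g x * D 1 (D 0 q) x + D 0 q x * (Lα (Pi.single 1 1))) := by
    rw [D, hV1.fderiv]; simp [D]
  have hmix : D 0 (D 1 q) x = D 1 (D 0 q) x := D_symm hq 0 1 x
  have hpq : D 1 p x = D 0 q x := D_symm hg 1 0 x
  have hr : (1 + (p x * p x + q x * q x)) ^ ((3:ℝ)/2) = w ^ 3 := by
    rw [hw_def, Real.sqrt_eq_rpow, ← Real.rpow_natCast _ 3, ← Real.rpow_mul hSpos.le]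
    norm_num
  rw [e0, e1, hmix, hr]
  have ha' : P (Pi.single 0 1) = D 0 p x := rfl
  have hm' : P (Pi.single 1 1) = D 1 p x := rfl
  have hm2' : Q (Pi.single 0 1) = D 0 q x := rfl
  have hb' : Q (Pi.single 1 1) = D 1 q x := rfl
  simp only [hLα_def, hLden_def, hLW_def, ContinuousLinearMap.add_apply,
    ContinuousLinearMap.coe_smul', Pi.smul_apply, smul_eq_mul]
  rw [ha', hm', hm2', hb', hpq]
  have hw' : w ≠ 0 := hwpos.ne'
  have hq' : (1 + q x * q x) ≠ 0 := hqq.ne'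
  field_simp
  linear_combination (2*(D 0 p x * D 1 q x - D 0 q x * D 0 q x)*(1+q x*q x)) * hw2

lemma contDiff_alp {g : P2 → ℝ} (hg : ContDiff ℝ (⊤ : ℕ∞) g) :
    ContDiff ℝ (⊤ : ℕ∞) (alp g) := by
  have hp := contDiff_D hg 0
  have hq := contDiff_D hg 1
  rw [contDiff_iff_contDiffAt]
  intro x
  have hSpos : (0:ℝ) < 1 + (D 0 g x * D 0 g x + D 1 g x * D 1 g x) := by
    nlinarith [mul_self_nonneg (D 0 g x), mul_self_nonneg (D 1 g x)]
  have hS : ContDiffAt ℝ (⊤:ℕ∞) (fun y => 1 + (D 0 g y * D 0 g y + D 1 g y * D 1 g y)) x :=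
    (contDiff_const.add ((hp.mul hp).add (hq.mul hq))).contDiffAt
  have hsqrt : ContDiffAt ℝ (⊤:ℕ∞) (fun y =>
      Real.sqrt (1 + (D 0 g y * D 0 g y + D 1 g y * D 1 g y))) x :=
    (Real.contDiffAt_sqrt hSpos.ne').comp x hS
  have hden : ContDiffAt ℝ (⊤:ℕ∞) (fun y => (1 + D 1 g y * D 1 g y) *
      Real.sqrt (1 + (D 0 g y * D 0 g y + D 1 g y * D 1 g y))) x :=
    (contDiff_const.add (hq.mul hq)).contDiffAt.mul hsqrt
  have hqq : (0:ℝ) < 1 + D 1 g x * D 1 g x := by nlinarith [mul_self_nonneg (D 1 g x)]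
  have hdnz : (1 + D 1 g x * D 1 g x) *
      Real.sqrt (1 + (D 0 g x * D 0 g x + D 1 g x * D 1 g x)) ≠ 0 :=
    (mul_pos hqq (Real.sqrt_pos.2 hSpos)).ne'
  exact hp.contDiffAt.mul (hden.inv hdnz)

lemma coe_single (j : Fin 2) :
    (fun i => (((Pi.single j 1 : Fin 2 → ℤ)) i : ℝ)) = (Pi.single j (1:ℝ)) := by
  funext i
  simp [Pi.single_apply, apply_ite]

set_option maxHeartbeats 800000 in
/-- The main statement in pi-space coordinates. -/
lemma key (g : P2 → ℝ) (hg : ContDiff ℝ (⊤:ℕ∞) g)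
    (hper : ∀ (x : P2) (k : Fin 2 → ℤ), g (x + fun i => (k i : ℝ)) = g x) :
    ∫ y in Set.Icc (0:P2) 1,
        (D 0 (D 0 g) y * D 1 (D 1 g) y - D 0 (D 1 g) y * D 1 (D 0 g) y)
          / (1 + (D 0 g y * D 0 g y + D 1 g y * D 1 g y)) ^ ((3:ℝ)/2) = 0 := by
  have h1top : (1 : WithTop ℕ∞) ≤ ((⊤:ℕ∞) : WithTop ℕ∞) := by exact_mod_cast le_top
  have hgd : Differentiable ℝ g := hg.differentiable (by simp)
  set V : Fin 2 → P2 → ℝ :=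
    ![fun y => alp g y * D 1 (D 1 g) y, fun y => -(alp g y * D 0 (D 1 g) y)] with hV
  have hVc : ∀ i, ContDiff ℝ (⊤:ℕ∞) (V i) := by
    intro i
    fin_cases i
    · exact (contDiff_alp hg).mul (contDiff_D (contDiff_D hg 1) 1)
    · exact ((contDiff_alp hg).mul (contDiff_D (contDiff_D hg 1) 0)).neg
  have hgper1 : ∀ (j : Fin 2) (x : P2), g (x + Pi.single j (1:ℝ)) = g x := by
    intro j x
    rw [← coe_single j]
    exact hper x (Pi.single j 1)
  have hp1 : ∀ (j : Fin 2) (x : P2), D 0 g (x + Pi.single j 1) = D 0 g x :=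
    fun j x => per_D hgd (hgper1 j) 0 x
  have hq1 : ∀ (j : Fin 2) (x : P2), D 1 g (x + Pi.single j 1) = D 1 g x :=
    fun j x => per_D hgd (hgper1 j) 1 x
  have hDq : ∀ (i j : Fin 2) (x : P2), D i (D 1 g) (x + Pi.single j 1) = D i (D 1 g) x :=
    fun i j x => per_D (diff_D hg 1) (hq1 j) i x
  have halp : ∀ (j : Fin 2) (x : P2), alp g (x + Pi.single j 1) = alp g x := by
    intro j x
    simp only [alp, hp1, hq1]
  have hVper : ∀ (i j : Fin 2) (y : P2), V i (y + Pi.single j (1:ℝ)) = V i y := by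
    intro i j y
    fin_cases i <;>
      simp only [hV, Fin.mk_zero, Fin.mk_one, Matrix.cons_val_zero, Matrix.cons_val_one,
        Matrix.head_cons, halp, hDq, Fin.isValue]
  have hle : (0:P2) ≤ 1 := by intro i; norm_num
  have hVd : ∀ (i : Fin 2) (y : P2), HasFDerivAt (V i) (fderiv ℝ (V i) y) y :=
    fun i y => (((hVc i).differentiable (by simp)) y).hasFDerivAt
  have hdivc : Continuous (fun y => ∑ i, fderiv ℝ (V i) y (Pi.single i 1)) := by
    have : ∀ i : Fin 2, Continuous (D i (V i)) := fun i =>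
      (contDiff_D (hVc i) i).continuous
    refine ((this 0).add (this 1)).congr fun y => ?_
    simp [Fin.sum_univ_two, D]
  have hdiv := MeasureTheory.integral_divergence_of_hasFDerivAt_off_countable'
      (n := 1) (0:P2) (1:P2) hle V (fun i y => fderiv ℝ (V i) y) ∅ Set.countable_empty
      (fun i => ((hVc i).continuous).continuousOn)
      (fun x _ i => hVd i x)
      (hdivc.integrableOn_Icc)
  have hfaces : ∀ i : Fin 2,
      ((∫ x in Set.Icc ((0:P2) ∘ i.succAbove) ((1:P2) ∘ i.succAbove),
        V i (i.insertNth (α := fun _ => ℝ) ((1:P2) i) x)) -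
       ∫ x in Set.Icc ((0:P2) ∘ i.succAbove) ((1:P2) ∘ i.succAbove),
        V i (i.insertNth (α := fun _ => ℝ) ((0:P2) i) x)) = 0 := by
    intro i
    have hptw : ∀ x : Fin 1 → ℝ, V i (i.insertNth (α := fun _ => ℝ) ((1:P2) i) x) =
        V i (i.insertNth (α := fun _ => ℝ) ((0:P2) i) x) := by
      intro x
      have hins : i.insertNth (α := fun _ => ℝ) ((1:P2) i) x
          = i.insertNth (α := fun _ => ℝ) ((0:P2) i) x + Pi.single i 1 := by
        funext j
        by_cases hj : j = i
        · subst hj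
          simp [Fin.insertNth_apply_same]
        · obtain ⟨k, rfl⟩ := Fin.exists_succAbove_eq hj
          simp [Fin.insertNth_apply_succAbove, Pi.single_eq_of_ne (Fin.succAbove_ne i k)]
      rw [hins, hVper i i _]
    simp only [hptw, sub_self]
  have hint : ∀ y : P2,
      (D 0 (D 0 g) y * D 1 (D 1 g) y - D 0 (D 1 g) y * D 1 (D 0 g) y)
          / (1 + (D 0 g y * D 0 g y + D 1 g y * D 1 g y)) ^ ((3:ℝ)/2)
      = ∑ i, fderiv ℝ (V i) y (Pi.single i 1) := by
    intro y
    rw [Fin.sum_univ_two]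
    simp only [hV, Matrix.cons_val_zero, Matrix.cons_val_one, Matrix.head_cons]
    exact (div_identity g hg y).symm
  calc ∫ y in Set.Icc (0:P2) 1,
        (D 0 (D 0 g) y * D 1 (D 1 g) y - D 0 (D 1 g) y * D 1 (D 0 g) y)
          / (1 + (D 0 g y * D 0 g y + D 1 g y * D 1 g y)) ^ ((3:ℝ)/2)
      = ∫ y in Set.Icc (0:P2) 1, ∑ i, fderiv ℝ (V i) y (Pi.single i 1) := by
        exact integral_congr_ae (Filter.Eventually.of_forall (fun y => hint y))
    _ = 0 := by
        rw [hdiv, Fin.sum_univ_two, hfaces 0, hfaces 1, add_zero]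

end GBAux

/-- For a smooth `ℤ²`-periodic `u : ℝ² → ℝ`, the integral over one
periodicity cell of the Gaussian curvature of the graph of `u` against the area element,
i.e. of `det D²u / (1 + |∇u|²)^{3/2}`, vanishes. -/
theorem stmt_0 (u : Euc 2 → ℝ) (hu : ContDiff ℝ (⊤ : ℕ∞) u)
    (hper : ∀ (x : Euc 2) (k : Fin 2 → ℤ), u (x + intVec k) = u x) :
    ∫ x in unitCube 2,
        (hessian u x).det / (1 + ‖gradient u x‖ ^ 2) ^ ((3 : ℝ) / 2) = 0 := by
  classical
  have h1top : (1 : WithTop ℕ∞) ≤ ((⊤:ℕ∞) : WithTop ℕ∞) := by exact_mod_cast le_top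
  set eL := EuclideanSpace.equiv (Fin 2) ℝ with heL
  set G : GBAux.P2 → ℝ := fun y => u (eL.symm y) with hG
  have hGc : ContDiff ℝ (⊤:ℕ∞) G := hu.comp (eL.symm.contDiff)
  have hueq : u = fun z => G (eL z) := by
    funext z; simp [hG]
  -- transport of directional derivatives
  have hT : ∀ (f : GBAux.P2 → ℝ), Differentiable ℝ f → ∀ (x : Euc 2) (i : Fin 2),
      fderiv ℝ (fun z => f (eL z)) x (EuclideanSpace.single i 1) = GBAux.D i f (eL x) := by
    intro f hf x i
    have h : HasFDerivAt (fun z => f (eL z))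
        ((fderiv ℝ f (eL x)).comp (eL.toContinuousLinearMap)) x :=
      (hf (eL x)).hasFDerivAt.comp x (eL.toContinuousLinearMap.hasFDerivAt)
    rw [h.fderiv]
    rfl
  have hGd : Differentiable ℝ G := hGc.differentiable (by simp)
  have h1 : ∀ (x : Euc 2) (i : Fin 2),
      fderiv ℝ u x (EuclideanSpace.single i 1) = GBAux.D i G (eL x) := by
    intro x i
    rw [hueq]
    exact hT G hGd x i
  have h2 : ∀ (x : Euc 2) (i j : Fin 2),
      hessian u x i j = GBAux.D i (GBAux.D j G) (eL x) := by
    intro x i j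
    show fderiv ℝ (fun y => fderiv ℝ u y (EuclideanSpace.single j 1)) x
        (EuclideanSpace.single i 1) = _
    have : (fun y : Euc 2 => fderiv ℝ u y (EuclideanSpace.single j 1))
        = fun y => (GBAux.D j G) (eL y) := funext fun y => h1 y j
    rw [this]
    exact hT (GBAux.D j G) (GBAux.diff_D hGc j) x i
  have h4 : ∀ x : Euc 2, ‖gradient u x‖ ^ 2
      = GBAux.D 0 G (eL x) * GBAux.D 0 G (eL x) + GBAux.D 1 G (eL x) * GBAux.D 1 G (eL x) := by
    intro x
    have hcoord : ∀ i : Fin 2, gradient u x i = fderiv ℝ u x (EuclideanSpace.single i 1) := by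
      intro i
      have h5 : (inner ℝ (gradient u x) (EuclideanSpace.single i (1:ℝ)) : ℝ)
          = fderiv ℝ u x (EuclideanSpace.single i 1) := by
        rw [gradient]
        exact InnerProductSpace.toDual_symm_apply
      rw [← h5, EuclideanSpace.inner_single_right]
      simp
    have hnorm : ‖gradient u x‖ ^ 2 = ∑ i, (gradient u x i) ^ 2 := by
      rw [EuclideanSpace.norm_eq, Real.sq_sqrt (by positivity)]
      simp [Real.norm_eq_abs, sq_abs]
    rw [hnorm, Fin.sum_univ_two, hcoord 0, hcoord 1, h1 x 0, h1 x 1]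
    ring
  -- the integrand in pi coordinates
  set Gint : GBAux.P2 → ℝ := fun y =>
      (GBAux.D 0 (GBAux.D 0 G) y * GBAux.D 1 (GBAux.D 1 G) y
        - GBAux.D 0 (GBAux.D 1 G) y * GBAux.D 1 (GBAux.D 0 G) y)
        / (1 + (GBAux.D 0 G y * GBAux.D 0 G y + GBAux.D 1 G y * GBAux.D 1 G y)) ^ ((3:ℝ)/2)
    with hGint
  have hintegrand : ∀ x : Euc 2,
      (hessian u x).det / (1 + ‖gradient u x‖ ^ 2) ^ ((3 : ℝ) / 2) = Gint (eL x) := by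
    intro x
    rw [Matrix.det_fin_two, h2 x 0 0, h2 x 1 1, h2 x 0 1, h2 x 1 0, h4 x, hGint]
  -- periodicity of G
  have hGper : ∀ (y : GBAux.P2) (k : Fin 2 → ℤ), G (y + fun i => (k i : ℝ)) = G y := by
    intro y k
    have : eL.symm (y + fun i => (k i : ℝ)) = eL.symm y + intVec k := by
      rw [map_add]
      rfl
    rw [hG]
    show u (eL.symm (y + fun i => (k i : ℝ))) = u (eL.symm y)
    rw [this]
    exact hper (eL.symm y) k
  -- transport of the integral
  have hset : unitCube 2 = ((MeasurableEquiv.toLp 2 (Fin 2 → ℝ)).symm) ⁻¹' (Set.Icc (0:GBAux.P2) 1) := by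
    ext x
    simp only [unitCube, Set.mem_setOf_eq, Set.mem_preimage, Set.mem_Icc, Pi.le_def,
      Set.mem_Icc]
    constructor
    · intro h
      exact ⟨fun i => (h i).1, fun i => (h i).2⟩
    · intro h i
      exact ⟨h.1 i, h.2 i⟩
  have hcoe : ∀ x : Euc 2, Gint (eL x) = Gint (((MeasurableEquiv.toLp 2 (Fin 2 → ℝ)).symm) x) := by
    intro x; rfl
  calc ∫ x in unitCube 2, (hessian u x).det / (1 + ‖gradient u x‖ ^ 2) ^ ((3 : ℝ) / 2)
      = ∫ x in ((MeasurableEquiv.toLp 2 (Fin 2 → ℝ)).symm) ⁻¹' (Set.Icc (0:GBAux.P2) 1),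
          Gint (((MeasurableEquiv.toLp 2 (Fin 2 → ℝ)).symm) x) := by
        rw [← hset]
        exact integral_congr_ae (Filter.Eventually.of_forall
          (fun x => (hintegrand x).trans (hcoe x)))
    _ = ∫ y in Set.Icc (0:GBAux.P2) 1, Gint y :=
        (EuclideanSpace.volume_preserving_symm_measurableEquiv_toLp (Fin 2)).setIntegral_preimage_emb
          (MeasurableEquiv.measurableEmbedding _) _ _
    _ = 0 := GBAux.key G hGc hGper
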